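/- Let D be a connected acyclic digraph of order n and let v be any vertex of D. Then for every k with 1 ≤ k ≤ n there exists a connected convex set of D of size k containing v. -/

import Mathlib

/-!
Digraphs are given by an arc relation `A : V → V → Prop` on a vertex type `V`.
A directed path from `a` to `b` is encoded as `a :: (l ++ [b])` where the list
satisfies `List.Chain A` (consecutive arcs) and `List.Nodup` (distinct vertices);
`l` is the list of internal vertices.
-/

variable {V : Type*}

/-- A non-empty vertex set `X` is convex if no directed path between two
vertices of `X` contains a vertex not in `X`. -/
def ConvexIn (A : V → V → Prop) (X : Set V) : Prop :=
  X.Nonempty ∧ ∀ a b : V, ∀ l : List V, a ∈ X → b ∈ X →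
    List.Chain A a (l ++ [b]) → (a :: (l ++ [b])).Nodup → ∀ w ∈ l, w ∈ X

/-- A vertex set is connected if the underlying undirected graph induced on it
is connected. -/
def ConnectedIn (A : V → V → Prop) (X : Set V) : Prop :=
  ((SimpleGraph.fromRel A).induce X).Connected

/-- A digraph is acyclic if it has no directed cycle, equivalently no
nontrivial directed closed walk. -/
def AcyclicDigraph (A : V → V → Prop) : Prop :=
  ∀ v, ¬ Relation.TransGen A v v

/-- A digraph is connected if its underlying undirected graph is connected. -/
def DigraphConnected (A : V → V → Prop) : Prop :=
  (SimpleGraph.fromRel A).Connected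

/-- A source is a vertex with in-degree zero. -/
def IsSourceIn (A : V → V → Prop) (v : V) : Prop := ∀ u, ¬ A u v

/-- A sink is a vertex with out-degree zero. -/
def IsSinkIn (A : V → V → Prop) (v : V) : Prop := ∀ u, ¬ A v u

/-- A cut-vertex of a connected digraph: deleting it disconnects the
underlying undirected graph. -/
def IsCutVertexIn (A : V → V → Prop) (v : V) : Prop :=
  ¬ ((SimpleGraph.fromRel A).induce {u | u ≠ v}).Connected

/- ---------- auxiliary lemmas ---------- -/

private lemma chain_transGen_of_mem {A : V → V → Prop} :
    ∀ {a : V} {l : List V}, List.Chain A a l → ∀ b ∈ l, Relation.TransGen A a b := by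
  intro a l
  induction l generalizing a with
  | nil => intro _ b hb; exact absurd hb List.not_mem_nil
  | cons c l ih =>
    intro h b hb
    rcases List.chain_cons.mp h with ⟨hac, hcl⟩
    rcases List.mem_cons.mp hb with rfl | hb
    · exact Relation.TransGen.single hac
    · exact Relation.TransGen.head hac (ih hcl b hb)

private lemma chain_transGen_last {A : V → V → Prop} :
    ∀ {a b : V} (l : List V), List.Chain A a (l ++ [b]) →
      ∀ w ∈ a :: l, Relation.TransGen A w b := by
  intro a b l
  induction l generalizing a with
  | nil =>
    intro h w hw
    rcases List.mem_cons.mp hw with rfl | hw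
    · exact Relation.TransGen.single ((List.chain_cons.mp h).1)
    · exact absurd hw List.not_mem_nil
  | cons c l ih =>
    intro h w hw
    rcases List.chain_cons.mp h with ⟨hac, hcl⟩
    rcases List.mem_cons.mp hw with rfl | hw
    · exact Relation.TransGen.head hac (ih hcl c List.mem_cons_self)
    · exact ih hcl w hw

private lemma convexIn_flip {A : V → V → Prop} {X : Set V} (h : ConvexIn A X) :
    ConvexIn (flip A) X := by
  refine ⟨h.1, fun a b l ha hb hc hnd w hw => ?_⟩
  have hrev : (a :: (l ++ [b])).reverse = b :: (l.reverse ++ [a]) := by simp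
  have hc2 : List.Chain' A ((a :: (l ++ [b])).reverse) :=
    List.isChain_reverse.mpr (hc : List.Chain' (flip A) (a :: (l ++ [b])))
  rw [hrev] at hc2
  have hnd2 : (b :: (l.reverse ++ [a])).Nodup := by
    rw [← hrev]; exact List.nodup_reverse.mpr hnd
  exact h.2 b a l.reverse hb ha hc2 hnd2 w (List.mem_reverse.mpr hw)

/-- one-vertex extension: if there is an arc from `X` to outside, we can add a
vertex `u₀` with an in-arc from `X`, keeping convexity. -/
private lemma extend_out {A : V → V → Prop} [Fintype V]
    (hacyc : AcyclicDigraph A) {X : Set V} (hconv : ConvexIn A X)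
    {x u : V} (hx : x ∈ X) (hu : u ∉ X) (harc : A x u) :
    ∃ u₀ ∉ X, (∃ x₀ ∈ X, A x₀ u₀) ∧ ConvexIn A (insert u₀ X) := by
  haveI : IsTrans V (Relation.TransGen A) := ⟨fun _ _ _ => Relation.TransGen.trans⟩
  haveI : IsIrrefl V (Relation.TransGen A) := ⟨hacyc⟩
  have wf := Finite.wellFounded_of_trans_of_irrefl (Relation.TransGen A)
  set T : Set V := {t | t ∉ X ∧ ∃ y ∈ X, Relation.TransGen A y t} with hT
  have hTne : T.Nonempty := ⟨u, hu, x, hx, Relation.TransGen.single harc⟩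
  obtain ⟨u₀, hu₀T, hmin⟩ := wf.has_min T hTne
  rw [hT, Set.mem_setOf_eq] at hu₀T
  obtain ⟨hu₀X, y, hyX, hyu₀⟩ := hu₀T
  -- there is an arc from X into u₀
  obtain ⟨x₀, hx₀X, harc₀⟩ : ∃ x₀ ∈ X, A x₀ u₀ := by
    rcases Relation.TransGen.tail'_iff.mp hyu₀ with ⟨z, hyz, hzu₀⟩
    rcases Relation.reflTransGen_iff_eq_or_transGen.mp hyz with heq | htz
    · exact ⟨y, hyX, heq ▸ hzu₀⟩
    · by_cases hzX : z ∈ X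
      · exact ⟨z, hzX, hzu₀⟩
      · exact absurd (Relation.TransGen.single hzu₀)
          (hmin z ⟨hzX, y, hyX, htz⟩)
  refine ⟨u₀, hu₀X, ⟨x₀, hx₀X, harc₀⟩, ⟨⟨u₀, Set.mem_insert _ _⟩, ?_⟩⟩
  intro a b l ha hb hchain hnodup w hwl
  by_contra hwX'
  have hwu₀ : w ≠ u₀ := fun h => hwX' (h ▸ Set.mem_insert _ _)
  have hwX : w ∉ X := fun h => hwX' (Set.mem_insert_of_mem _ h)
  rcases Set.mem_insert_iff.mp ha with hau | haX
  · subst hau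
    rcases Set.mem_insert_iff.mp hb with hbu | hbX
    · -- a = b = u₀ : nodup fails
      exact (List.nodup_cons.mp hnodup).1
        (List.mem_append_right _ (List.mem_singleton.mpr hbu.symm))
    · -- a = u₀, b ∈ X : prepend x₀ and contradict convexity of X
      have hx₀ne : x₀ ∉ a :: (l ++ [b]) := by
        intro hmem
        rcases List.mem_cons.mp hmem with heq | hmem
        · exact hu₀X (heq ▸ hx₀X)
        · exact hacyc a ((chain_transGen_of_mem hchain x₀ hmem).tail harc₀)
      have hchain2 : List.Chain A x₀ ((a :: l) ++ [b]) := List.Chain.cons harc₀ hchain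
      have hnodup2 : (x₀ :: ((a :: l) ++ [b])).Nodup :=
        List.nodup_cons.mpr ⟨hx₀ne, hnodup⟩
      have := hconv.2 x₀ b (a :: l) hx₀X hbX hchain2 hnodup2 a List.mem_cons_self
      exact hu₀X this
  · rcases Set.mem_insert_iff.mp hb with hbu | hbX
    · -- a ∈ X, b = u₀ : w is in T and below u₀, contradicting minimality
      subst hbu
      have h1 : Relation.TransGen A a w :=
        chain_transGen_of_mem hchain w (List.mem_append_left _ hwl)
      have h2 : Relation.TransGen A w b :=
        chain_transGen_last l hchain w (List.mem_cons_of_mem a hwl)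
      exact hmin w ⟨hwX, a, haX, h1⟩ h2
    · exact hwX (hconv.2 a b l haX hbX hchain hnodup w hwl)

private lemma fromRel_flip (A : V → V → Prop) :
    SimpleGraph.fromRel (flip A) = SimpleGraph.fromRel A := by
  ext a b
  simp only [SimpleGraph.fromRel_adj, flip]
  tauto

/-- In a connected acyclic digraph, every vertex lies in a
connected convex set of size `k`, for every `1 ≤ k ≤ n`. -/
theorem stmt_7 {V : Type*} [Fintype V] (A : V → V → Prop)
    (hconn : DigraphConnected A) (hacyc : AcyclicDigraph A)
    (v : V) (k : ℕ) (hk1 : 1 ≤ k) (hkn : k ≤ Fintype.card V) :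
    ∃ X : Set V, v ∈ X ∧ ConnectedIn A X ∧ ConvexIn A X ∧ X.ncard = k := by
  induction k, hk1 using Nat.le_induction with
  | base =>
    refine ⟨{v}, rfl, ?_, ?_, Set.ncard_singleton v⟩
    · unfold ConnectedIn
      rw [SimpleGraph.induce_singleton_eq_top]
      haveI : Nonempty ({v} : Set V) := ⟨⟨v, rfl⟩⟩
      exact SimpleGraph.connected_top
    · refine ⟨⟨v, rfl⟩, fun a b l ha hb hchain hnodup w hw => ?_⟩
      have hab : a = b := (Set.eq_of_mem_singleton ha).trans (Set.eq_of_mem_singleton hb).symm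
      exact absurd (List.mem_append_right _ (List.mem_singleton.mpr hab))
        (List.nodup_cons.mp hnodup).1
  | succ n hn ih =>
    obtain ⟨X, hvX, hXconn, hXconv, hXcard⟩ := ih (le_trans (Nat.le_succ n) hkn)
    -- X is a proper subset, find a crossing edge
    have hXne : X ≠ Set.univ := by
      intro h
      rw [h, Set.ncard_univ, Nat.card_eq_fintype_card] at hXcard
      omega
    obtain ⟨y, hyX⟩ : ∃ y, y ∉ X := by
      by_contra h
      push_neg at h
      exact hXne (Set.eq_univ_of_forall h)
    obtain ⟨p⟩ := hconn.preconnected v y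
    obtain ⟨d, -, hdfst, hdsnd⟩ := p.exists_boundary_dart X hvX hyX
    have hadj := d.adj
    rw [SimpleGraph.fromRel_adj] at hadj
    -- extract u₀ : new vertex with ConvexIn (insert u₀ X) and an adjacency to X
    obtain ⟨u₀, hu₀X, x₀, hx₀X, hadj₀, hconv'⟩ :
        ∃ u₀ ∉ X, ∃ x₀ ∈ X, (SimpleGraph.fromRel A).Adj x₀ u₀ ∧
          ConvexIn A (insert u₀ X) := by
      rcases hadj.2 with harc | harc
      · obtain ⟨u₀, hu₀X, ⟨x₀, hx₀X, harc₀⟩, hconv'⟩ :=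
          extend_out hacyc hXconv hdfst hdsnd harc
        refine ⟨u₀, hu₀X, x₀, hx₀X, ?_, hconv'⟩
        rw [SimpleGraph.fromRel_adj]
        exact ⟨fun h => hu₀X (h ▸ hx₀X), Or.inl harc₀⟩
      · have hacyc' : AcyclicDigraph (flip A) := by
          intro z hz
          exact hacyc z ((Relation.transGen_swap).mp hz)
        obtain ⟨u₀, hu₀X, ⟨x₀, hx₀X, harc₀⟩, hconv'⟩ :=
          extend_out hacyc' (convexIn_flip hXconv) hdfst hdsnd
            (show flip A d.fst d.snd from harc)
        refine ⟨u₀, hu₀X, x₀, hx₀X, ?_, ?_⟩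
        · rw [SimpleGraph.fromRel_adj]
          exact ⟨fun h => hu₀X (h ▸ hx₀X), Or.inr harc₀⟩
        · exact convexIn_flip hconv'
    refine ⟨insert u₀ X, Set.mem_insert_of_mem _ hvX, ?_, hconv', ?_⟩
    · -- connectivity
      have hpair : ((SimpleGraph.fromRel A).induce {x₀, u₀}).Connected :=
        SimpleGraph.induce_pair_connected_of_adj hadj₀
      have hunion := SimpleGraph.induce_union_connected (SimpleGraph.Connected.preconnected hXconn) hpair.preconnected
        ⟨x₀, hx₀X, Or.inl rfl⟩
      have heq : X ∪ {x₀, u₀} = insert u₀ X := by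
        ext z
        simp only [Set.mem_union, Set.mem_insert_iff, Set.mem_singleton_iff]
        constructor
        · rintro (h | rfl | rfl)
          · exact Or.inr h
          · exact Or.inr hx₀X
          · exact Or.inl rfl
        · rintro (rfl | h)
          · exact Or.inr (Or.inr rfl)
          · exact Or.inl h
      rw [← heq]
      exact hunion
    · rw [Set.ncard_insert_of_notMem hu₀X (Set.toFinite X), hXcard]
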